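/- If f: ℝ^{d₁} × ℝ^{d₂} → ℝ is continuously differentiable and (x*,y*) is a local minimax point of f, then ∇_x f(x*,y*) = 0 and ∇_y f(x*,y*) = 0. -/

import Mathlib

open Metric Filter Set InnerProductSpace

noncomputable section

/-- `(xs, ys)` is a local minimax point of `f`. -/
def IsLocalMinimax {d₁ d₂ : ℕ}
    (f : EuclideanSpace ℝ (Fin d₁) → EuclideanSpace ℝ (Fin d₂) → ℝ)
    (xs : EuclideanSpace ℝ (Fin d₁)) (ys : EuclideanSpace ℝ (Fin d₂)) : Prop :=
  ∃ δ₀ > (0 : ℝ), ∃ h : ℝ → ℝ,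
    (∀ δ ∈ Set.Ioc (0 : ℝ) δ₀, 0 ≤ h δ) ∧
    Tendsto h (nhdsWithin 0 (Set.Ioi 0)) (nhds 0) ∧
    ∀ δ ∈ Set.Ioc (0 : ℝ) δ₀, ∀ x y,
      ‖x - xs‖ ≤ δ → ‖y - ys‖ ≤ δ →
        f xs y ≤ f xs ys ∧ f xs ys ≤ sSup (f x '' closedBall ys (h δ))

/-- First-order necessary condition for local minimax points: at a local
minimax point of a continuously differentiable `f`, both partial gradients
vanish. -/
theorem stmt_7 {d₁ d₂ : ℕ}
    (f : EuclideanSpace ℝ (Fin d₁) → EuclideanSpace ℝ (Fin d₂) → ℝ)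
    (hf : ContDiff ℝ 1
      (fun p : EuclideanSpace ℝ (Fin d₁) × EuclideanSpace ℝ (Fin d₂) => f p.1 p.2))
    (xs : EuclideanSpace ℝ (Fin d₁)) (ys : EuclideanSpace ℝ (Fin d₂))
    (hmm : IsLocalMinimax f xs ys) :
    gradient (fun x => f x ys) xs = 0 ∧ gradient (f xs) ys = 0 := by
  obtain ⟨δ₀, hδ₀, h, hh0, htend, hmain⟩ := hmm
  set F : EuclideanSpace ℝ (Fin d₁) × EuclideanSpace ℝ (Fin d₂) → ℝ := fun p => f p.1 p.2 with hFdef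
  have hFd : Differentiable ℝ F := hf.differentiable one_ne_zero
  set D : (EuclideanSpace ℝ (Fin d₁) × EuclideanSpace ℝ (Fin d₂)) →L[ℝ] ℝ := fderiv ℝ F (xs, ys) with hD
  set Pl : EuclideanSpace ℝ (Fin d₁) →L[ℝ] (EuclideanSpace ℝ (Fin d₁) × EuclideanSpace ℝ (Fin d₂)) :=
    (ContinuousLinearMap.id ℝ (EuclideanSpace ℝ (Fin d₁))).prod 0 with hPl
  -- partial derivative in x at arbitrary (z, y')
  have hdx : ∀ (z : EuclideanSpace ℝ (Fin d₁)) (y' : EuclideanSpace ℝ (Fin d₂)),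
      HasFDerivAt (fun w => f w y') ((fderiv ℝ F (z, y')).comp Pl) z := by
    intro z y'
    exact (hFd (z, y')).hasFDerivAt.comp z (HasFDerivAt.prodMk (hasFDerivAt_id z) (hasFDerivAt_const y' z) : HasFDerivAt (fun w => (w, y')) Pl z)
  -- partial derivative in y at (xs, ys)
  have hdy : HasFDerivAt (f xs)
      (D.comp ((0 : EuclideanSpace ℝ (Fin d₂) →L[ℝ] EuclideanSpace ℝ (Fin d₁)).prod
        (ContinuousLinearMap.id ℝ (EuclideanSpace ℝ (Fin d₂))))) ys :=
    (hFd (xs, ys)).hasFDerivAt.comp ys (HasFDerivAt.prodMk (hasFDerivAt_const xs ys) (hasFDerivAt_id ys))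
  -- y-part
  have hmax : IsLocalMax (f xs) ys := by
    filter_upwards [closedBall_mem_nhds ys hδ₀] with y hy
    exact (hmain δ₀ ⟨hδ₀, le_rfl⟩ xs y (by simp [hδ₀.le]) (by rw [← dist_eq_norm]; exact hy)).1
  have hDy0 : D.comp ((0 : EuclideanSpace ℝ (Fin d₂) →L[ℝ] EuclideanSpace ℝ (Fin d₁)).prod
      (ContinuousLinearMap.id ℝ (EuclideanSpace ℝ (Fin d₂)))) = 0 :=
    hmax.hasFDerivAt_eq_zero hdy
  have hgy : gradient (f xs) ys = 0 := by
    have := hdy.fderiv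
    rw [hDy0] at this
    rw [gradient, this, map_zero]
  refine ⟨?_, hgy⟩
  -- x-part
  by_contra hg
  set g : EuclideanSpace ℝ (Fin d₁) := gradient (fun x => f x ys) xs with hgdef
  have hgnorm : 0 < ‖g‖ := norm_pos_iff.2 hg
  -- inner product identity
  have hinner : ∀ v : EuclideanSpace ℝ (Fin d₁), (D.comp Pl) v = ⟪g, v⟫_ℝ := by
    intro v
    rw [hgdef, gradient, toDual_symm_apply, (hdx xs ys).fderiv]
  -- continuity of fderiv
  have hcont : ContinuousAt (fderiv ℝ F) (xs, ys) :=
    (hf.continuous_fderiv one_ne_zero).continuousAt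
  have hev : {p : EuclideanSpace ℝ (Fin d₁) × EuclideanSpace ℝ (Fin d₂) | ‖fderiv ℝ F p - D‖ < ‖g‖ / 2} ∈ nhds (xs, ys) := by
    have : Metric.ball D (‖g‖ / 2) ∈ nhds D := Metric.ball_mem_nhds D (by positivity)
    have := hcont this
    refine Filter.mem_of_superset this ?_
    intro p hp
    simpa [Metric.mem_ball, dist_eq_norm] using hp
  obtain ⟨r, hr, hball⟩ := Metric.mem_nhds_iff.1 hev
  -- pick a so that h δ is small for small δ
  have hev2 : {δ : ℝ | h δ < min (r / 2) δ₀} ∈ nhdsWithin 0 (Set.Ioi 0) := by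
    exact htend (Iio_mem_nhds (by positivity))
  obtain ⟨a, ha, hIoo⟩ := mem_nhdsGT_iff_exists_Ioo_subset.1 hev2
  set δ : ℝ := min (min δ₀ (r / 2)) (a / 2) with hδdef
  have hrpos : (0 : ℝ) < r := hr
  have hapos : (0 : ℝ) < a := ha
  have hδpos : 0 < δ := by positivity
  have hδδ₀ : δ ≤ δ₀ := le_trans (min_le_left _ _) (min_le_left _ _)
  have hδr : δ ≤ r / 2 := le_trans (min_le_left _ _) (min_le_right _ _)
  have hδa : δ < a := lt_of_le_of_lt (min_le_right _ _) (by linarith)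
  have hhδ : h δ < min (r / 2) δ₀ := hIoo ⟨hδpos, hδa⟩
  have hhδ0 : 0 ≤ h δ := hh0 δ ⟨hδpos, hδδ₀⟩
  set x : EuclideanSpace ℝ (Fin d₁) := xs - (δ / ‖g‖) • g with hxdef
  have hxnorm : ‖x - xs‖ = δ := by
    rw [hxdef]
    rw [sub_sub_cancel_left, norm_neg, norm_smul, norm_div, Real.norm_eq_abs,
      abs_of_pos hδpos, Real.norm_eq_abs, abs_of_pos hgnorm]
    field_simp
  obtain ⟨-, hsup⟩ := hmain δ ⟨hδpos, hδδ₀⟩ x ys (le_of_eq hxnorm) (by simp [hδpos.le])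
  have key : ∀ y' ∈ closedBall ys (h δ), f x y' ≤ f xs ys - δ * (‖g‖ / 2) := by
    intro y' hy'
    have hy'norm : ‖y' - ys‖ ≤ h δ := by rw [← dist_eq_norm]; exact hy'
    have h1 : f xs y' ≤ f xs ys :=
      (hmain δ₀ ⟨hδ₀, le_rfl⟩ xs y' (by simp [hδ₀.le])
        (le_trans hy'norm (le_of_lt (lt_of_lt_of_le hhδ (min_le_right _ _))))).1
    -- mean value inequality on the segment in x
    have hmvt := (convex_closedBall xs δ).norm_image_sub_le_of_norm_hasFDerivWithin_le'
      (f := fun w => f w y') (f' := fun z => (fderiv ℝ F (z, y')).comp Pl)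
      (φ := D.comp Pl) (C := ‖g‖ / 2)
      (fun z _ => (hdx z y').hasFDerivWithinAt)
      (fun z hz => ?_) (mem_closedBall_self hδpos.le)
      (by rw [mem_closedBall, dist_eq_norm, hxnorm])
    · have hφ : (D.comp Pl) (x - xs) = -(δ * ‖g‖) := by
        rw [hinner, hxdef, sub_sub_cancel_left, inner_neg_right, real_inner_smul_right,
          real_inner_self_eq_norm_sq]
        field_simp
      rw [hφ, hxnorm, Real.norm_eq_abs] at hmvt
      have := (abs_le.1 hmvt).2
      linarith
    · -- the bound on the derivative
      have hPlnorm : ‖Pl‖ ≤ 1 := by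
        refine ContinuousLinearMap.opNorm_le_bound _ zero_le_one fun u => ?_
        simp [hPl, Prod.norm_def]
      have hz' : (z, y') ∈ Metric.ball (xs, ys) r := by
        rw [Metric.mem_ball, Prod.dist_eq]
        have h1 : dist z xs ≤ δ := hz
        have h2 : dist y' ys < r / 2 := lt_of_le_of_lt hy' (lt_of_lt_of_le hhδ (min_le_left _ _))
        have : dist z xs < r := by linarith
        exact max_lt this (by linarith)
      have hb : ‖fderiv ℝ F (z, y') - D‖ < ‖g‖ / 2 := hball hz'
      calc ‖(fderiv ℝ F (z, y')).comp Pl - D.comp Pl‖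
          = ‖(fderiv ℝ F (z, y') - D).comp Pl‖ := by
            rw [ContinuousLinearMap.sub_comp]
        _ ≤ ‖fderiv ℝ F (z, y') - D‖ * ‖Pl‖ := ContinuousLinearMap.opNorm_comp_le _ _
        _ ≤ ‖fderiv ℝ F (z, y') - D‖ * 1 := by
            exact mul_le_mul_of_nonneg_left hPlnorm (norm_nonneg _)
        _ ≤ ‖g‖ / 2 := by rw [mul_one]; exact hb.le
  have hsup' : sSup (f x '' closedBall ys (h δ)) ≤ f xs ys - δ * (‖g‖ / 2) := by
    refine csSup_le (Set.Nonempty.image _ ⟨ys, mem_closedBall_self hhδ0⟩) ?_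
    rintro _ ⟨y', hy', rfl⟩
    exact key y' hy'
  have : 0 < δ * (‖g‖ / 2) := by positivity
  linarith
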